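/- Let X = εZ where ε is Rademacher (uniform on {−1,1}) independent of Z ∼ N(a, I_d), and let R(β) = E[ρ(X·β)] with ρ(t) = log(1+e^t) - t·e^t/(1+e^t). Then R(β) = R(−β) for all β ∈ ℝ^d, and for fixed ‖β‖₂ = r, R(β) is a decreasing function of |β·a|. -/

import Mathlib

open MeasureTheory ProbabilityTheory Real

open Set
open scoped ENNReal NNReal

set_option maxHeartbeats 1000000

noncomputable def rr (t : ℝ) : ℝ := Real.log (1 + Real.exp t) - t * Real.exp t / (1 + Real.exp t)
noncomputable def rr' (t : ℝ) : ℝ := -(t * Real.exp t / (1 + Real.exp t)^2)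


lemma rr_even (t : ℝ) : rr (-t) = rr t := by
  unfold rr
  have h := Real.exp_ne_zero t
  rw [Real.exp_neg]
  rw [show (1 + (Real.exp t)⁻¹) = (1 + Real.exp t) / Real.exp t by field_simp; ring]
  rw [Real.log_div (by positivity) h, Real.log_exp]
  field_simp
  ring


lemma hasDerivAt_rr (t : ℝ) : HasDerivAt rr (rr' t) t := by
  have he : (0:ℝ) < 1 + Real.exp t := by positivity
  have h1 : HasDerivAt (fun t : ℝ => 1 + Real.exp t) (Real.exp t) t :=
    (Real.hasDerivAt_exp t).const_add 1
  have h2 : HasDerivAt (fun t : ℝ => Real.log (1 + Real.exp t))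
      (Real.exp t / (1 + Real.exp t)) t := h1.log he.ne'
  have h3 : HasDerivAt (fun t : ℝ => t * Real.exp t)
      (1 * Real.exp t + t * Real.exp t) t :=
    (hasDerivAt_id t).mul (Real.hasDerivAt_exp t)
  have h4 : HasDerivAt (fun t : ℝ => t * Real.exp t / (1 + Real.exp t))
      (((1 * Real.exp t + t * Real.exp t) * (1 + Real.exp t)
        - t * Real.exp t * Real.exp t) / (1 + Real.exp t)^2) t := h3.div h1 he.ne'
  have := h2.sub h4
  refine this.congr_deriv ?_
  unfold rr'
  field_simp
  ring

lemma rr'_nonpos {t : ℝ} (ht : 0 ≤ t) : rr' t ≤ 0 := by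
  unfold rr'
  have : 0 ≤ t * Real.exp t / (1 + Real.exp t)^2 := by positivity
  linarith

lemma rr'_abs_le (t : ℝ) : |rr' t| ≤ 1 := by
  unfold rr'
  rw [abs_neg, abs_div, abs_of_pos (by positivity : (0:ℝ) < (1 + Real.exp t)^2),
    abs_mul, abs_of_pos (Real.exp_pos t)]
  rw [div_le_one (by positivity)]
  rcases le_or_gt 0 t with h | h
  · rw [abs_of_nonneg h]
    nlinarith [Real.exp_pos t, Real.add_one_le_exp t]
  · rw [abs_of_neg h]
    have h1 : -t ≤ Real.exp (-t) := by nlinarith [Real.add_one_le_exp (-t)]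
    have h2 : Real.exp (-t) * Real.exp t = 1 := by
      rw [← Real.exp_add]; simp
    nlinarith [Real.exp_pos t, Real.exp_pos (-t)]

lemma rr_abs_le (t : ℝ) : |rr t| ≤ 2 := by
  have key : ∀ s : ℝ, s ≤ 0 → |rr s| ≤ 2 := by
    intro s hs
    have he : (0:ℝ) < 1 + Real.exp s := by positivity
    have h1 : Real.exp s ≤ 1 := Real.exp_le_one_iff.mpr hs
    have hlog : 0 ≤ Real.log (1 + Real.exp s) := Real.log_nonneg (by linarith [Real.exp_pos s])
    have hlog2 : Real.log (1 + Real.exp s) ≤ 1 := by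
      calc Real.log (1 + Real.exp s) ≤ Real.log 2 := by
            apply Real.log_le_log (by positivity); linarith
        _ ≤ 1 := by
            rw [Real.log_le_iff_le_exp (by norm_num)]
            nlinarith [Real.add_one_le_exp (1:ℝ)]
    have hterm : 0 ≤ -(s * Real.exp s / (1 + Real.exp s)) := by
      rw [show -(s * Real.exp s / (1 + Real.exp s)) = (-(s * Real.exp s))/(1 + Real.exp s) by ring]
      apply div_nonneg _ he.le
      nlinarith [Real.exp_pos s]
    have hterm2 : -(s * Real.exp s / (1 + Real.exp s)) ≤ 1 := by
      rw [show -(s * Real.exp s / (1 + Real.exp s)) = (-(s * Real.exp s))/(1 + Real.exp s) by ring]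
      rw [div_le_one he]
      have h1' : -s ≤ Real.exp (-s) := by nlinarith [Real.add_one_le_exp (-s)]
      have h2 : Real.exp (-s) * Real.exp s = 1 := by rw [← Real.exp_add]; simp
      nlinarith [Real.exp_pos s, Real.exp_pos (-s)]
    unfold rr
    rw [abs_le]; constructor <;> nlinarith
  rcases le_or_gt t 0 with h | h
  · exact key t h
  · rw [← rr_even]; exact key (-t) (by linarith)

lemma rr_antitoneOn : AntitoneOn rr (Set.Ici 0) := by
  apply antitoneOn_of_deriv_nonpos (convex_Ici 0)
  · exact fun x _ => ((hasDerivAt_rr x).continuousAt).continuousWithinAt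
  · intro x _
    exact (hasDerivAt_rr x).differentiableAt.differentiableWithinAt
  · intro x hx
    rw [(hasDerivAt_rr x).deriv]
    exact rr'_nonpos (le_of_lt (by simpa using hx))

lemma rr_abs_eq (t : ℝ) : rr |t| = rr t := by
  rcases abs_cases t with ⟨h, _⟩ | ⟨h, _⟩
  · rw [h]
  · rw [h, rr_even]

lemma rr_anti {x y : ℝ} (h : |x| ≤ |y|) : rr y ≤ rr x := by
  rw [← rr_abs_eq x, ← rr_abs_eq y]
  exact rr_antitoneOn (abs_nonneg x) (abs_nonneg y) h

lemma gaussianPDFReal_conv {v₁ v₂ : ℝ≥0} (h₁ : v₁ ≠ 0) (h₂ : v₂ ≠ 0) (y : ℝ) :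
    ∫ x, gaussianPDFReal 0 v₁ x * gaussianPDFReal x v₂ y
      = gaussianPDFReal 0 (v₁ + v₂) y := by
  have hw1 : (0:ℝ) < v₁ := by positivity
  have hw2 : (0:ℝ) < v₂ := by positivity
  set w₁ : ℝ := (v₁ : ℝ) with hw1d
  set w₂ : ℝ := (v₂ : ℝ) with hw2d
  have hW : (0:ℝ) < w₁ + w₂ := by linarith
  set A : ℝ := (w₁ + w₂) / (2 * w₁ * w₂) with hA
  have hApos : 0 < A := by positivity
  set c : ℝ := w₁ * y / (w₁ + w₂) with hc
  have key : ∀ x : ℝ, gaussianPDFReal 0 v₁ x * gaussianPDFReal x v₂ y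
      = ((√(2 * π * w₁))⁻¹ * (√(2 * π * w₂))⁻¹ * rexp (- y^2 / (2 * (w₁ + w₂))))
        * rexp (- A * (x - c)^2) := by
    intro x
    unfold gaussianPDFReal
    rw [show ((√(2 * π * v₁))⁻¹ * rexp (- (x - 0)^2 / (2 * v₁)))
        * ((√(2 * π * v₂))⁻¹ * rexp (- (y - x)^2 / (2 * v₂)))
      = (√(2 * π * w₁))⁻¹ * (√(2 * π * w₂))⁻¹
        * (rexp (- (x - 0)^2 / (2 * w₁)) * rexp (- (y - x)^2 / (2 * w₂))) by
        rw [hw1d, hw2d]; ring]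
    rw [← Real.exp_add]
    rw [show -(x - 0)^2 / (2 * w₁) + -(y - x)^2 / (2 * w₂)
        = - y^2 / (2 * (w₁ + w₂)) + (- A * (x - c)^2) by
      rw [hA, hc]; field_simp; ring]
    rw [Real.exp_add]
    ring
  simp_rw [key]
  rw [integral_const_mul, integral_sub_right_eq_self (fun x => rexp (- A * x^2)) c,
    integral_gaussian]
  unfold gaussianPDFReal
  rw [show ((v₁ + v₂ : ℝ≥0) : ℝ) = w₁ + w₂ by push_cast; rfl]
  have hs : (√(2 * π * w₁))⁻¹ * (√(2 * π * w₂))⁻¹ * √(π / A)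
      = (√(2 * π * (w₁ + w₂)))⁻¹ := by
    rw [← Real.sqrt_inv, ← Real.sqrt_inv, ← Real.sqrt_inv,
      ← Real.sqrt_mul (by positivity), ← Real.sqrt_mul (by positivity)]
    congr 1
    rw [hA]
    field_simp
  rw [show (y - 0)^2 = y^2 by ring]
  calc (√(2 * π * w₁))⁻¹ * (√(2 * π * w₂))⁻¹ * rexp (- y^2 / (2 * (w₁ + w₂))) * √(π / A)
      = ((√(2 * π * w₁))⁻¹ * (√(2 * π * w₂))⁻¹ * √(π / A)) * rexp (- y^2 / (2 * (w₁ + w₂))) := by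
        ring
    _ = (√(2 * π * (w₁ + w₂)))⁻¹ * rexp (- y^2 / (2 * (w₁ + w₂))) := by rw [hs]


lemma measurable_pdf2 (v₂ : ℝ≥0) :
    Measurable (fun p : ℝ × ℝ => gaussianPDFReal p.1 v₂ p.2) := by
  unfold gaussianPDFReal
  fun_prop

lemma measurable_pdf2' (v₂ : ℝ≥0) (y : ℝ) :
    Measurable (fun x : ℝ => gaussianPDFReal x v₂ y) := by
  unfold gaussianPDFReal
  fun_prop

lemma gauss_conv_lintegral {v₁ v₂ : ℝ≥0} (h₁ : v₁ ≠ 0) (h₂ : v₂ ≠ 0) {s : Set ℝ}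
    (hs : MeasurableSet s) :
    ∫⁻ x, gaussianReal x v₂ s ∂(gaussianReal 0 v₁) = gaussianReal 0 (v₁ + v₂) s := by
  have hWne : v₁ + v₂ ≠ 0 := by simp [h₁, h₂]
  have hpdf1 : Measurable (gaussianPDF 0 v₁) :=
    (measurable_gaussianPDFReal 0 v₁).ennreal_ofReal
  have hjoint : Measurable (fun p : ℝ × ℝ =>
      ENNReal.ofReal (gaussianPDFReal 0 v₁ p.1) * ENNReal.ofReal (gaussianPDFReal p.1 v₂ p.2)) := by
    apply Measurable.mul (f := fun p : ℝ × ℝ => ENNReal.ofReal (gaussianPDFReal 0 v₁ p.1))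
      (g := fun p : ℝ × ℝ => ENNReal.ofReal (gaussianPDFReal p.1 v₂ p.2))
    · exact ((measurable_gaussianPDFReal 0 v₁).comp measurable_fst).ennreal_ofReal
    · exact (measurable_pdf2 v₂).ennreal_ofReal
  have hin : Measurable (fun x : ℝ => ∫⁻ y in s, ENNReal.ofReal (gaussianPDFReal x v₂ y)) := by
    exact Measurable.lintegral_prod_right ((measurable_pdf2 v₂).ennreal_ofReal)
  rw [lintegral_congr (fun x => gaussianReal_apply x h₂ s), gaussianReal_of_var_ne_zero _ h₁]
  simp_rw [gaussianPDF_def]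
  rw [lintegral_withDensity_eq_lintegral_mul _ (measurable_gaussianPDFReal 0 v₁).ennreal_ofReal hin]
  have h1 : ∀ x : ℝ, (ENNReal.ofReal (gaussianPDFReal 0 v₁ x)
        * ∫⁻ y in s, ENNReal.ofReal (gaussianPDFReal x v₂ y))
      = ∫⁻ y in s, ENNReal.ofReal (gaussianPDFReal 0 v₁ x)
        * ENNReal.ofReal (gaussianPDFReal x v₂ y) := by
    intro x
    rw [lintegral_const_mul _ (measurable_gaussianPDFReal x v₂).ennreal_ofReal]
  have hswap : ∫⁻ x, ∫⁻ y in s, ENNReal.ofReal (gaussianPDFReal 0 v₁ x)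
        * ENNReal.ofReal (gaussianPDFReal x v₂ y) ∂volume
      = ∫⁻ y in s, ∫⁻ x, ENNReal.ofReal (gaussianPDFReal 0 v₁ x)
        * ENNReal.ofReal (gaussianPDFReal x v₂ y) ∂volume := by
    exact lintegral_lintegral_swap hjoint.aemeasurable
  show ∫⁻ x, (ENNReal.ofReal (gaussianPDFReal 0 v₁ x) * ∫⁻ y in s, ENNReal.ofReal (gaussianPDFReal x v₂ y)) ∂volume = _
  simp_rw [h1]
  rw [hswap, gaussianReal_apply _ hWne]
  apply setLIntegral_congr_fun hs
  intro y _
  have hint : Integrable (fun x : ℝ => gaussianPDFReal 0 v₁ x * gaussianPDFReal x v₂ y) := by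
    apply Integrable.mono' ((integrable_gaussianPDFReal 0 v₁).const_mul ((√(2 * π * v₂))⁻¹))
    · exact ((measurable_gaussianPDFReal 0 v₁).mul (measurable_pdf2' v₂ y)).aestronglyMeasurable
    · apply ae_of_all
      intro x
      rw [Real.norm_eq_abs, abs_of_nonneg (mul_nonneg (gaussianPDFReal_nonneg _ _ _) (gaussianPDFReal_nonneg _ _ _))]
      rw [mul_comm ((√(2 * π * (v₂:ℝ)))⁻¹) _]
      apply mul_le_mul_of_nonneg_left _ (gaussianPDFReal_nonneg _ _ _)
      unfold gaussianPDFReal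
      have hle : rexp (-(y - x)^2 / (2 * v₂)) ≤ 1 := by
        apply Real.exp_le_one_iff.mpr
        apply div_nonpos_of_nonpos_of_nonneg (by nlinarith [sq_nonneg (y-x)]) (by positivity)
      calc (√(2 * π * v₂))⁻¹ * rexp (-(y - x)^2 / (2 * v₂)) ≤ (√(2 * π * v₂))⁻¹ * 1 :=
            mul_le_mul_of_nonneg_left hle (by positivity)
        _ = (√(2 * π * v₂))⁻¹ := mul_one _
  simp_rw [← ENNReal.ofReal_mul (gaussianPDFReal_nonneg 0 v₁ _)]
  rw [← ofReal_integral_eq_lintegral_ofReal hint (ae_of_all _ (fun x =>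
    mul_nonneg (gaussianPDFReal_nonneg _ _ _) (gaussianPDFReal_nonneg _ _ _)))]
  rw [gaussianPDFReal_conv h₁ h₂ y]
  rfl

lemma gaussianReal_conv (v₁ v₂ : ℝ≥0) :
    ((gaussianReal 0 v₁).prod (gaussianReal 0 v₂)).map (fun p : ℝ × ℝ => p.1 + p.2)
      = gaussianReal 0 (v₁ + v₂) := by
  have hadd : Measurable (fun p : ℝ × ℝ => p.1 + p.2) := measurable_fst.add measurable_snd
  ext s hs
  rw [Measure.map_apply hadd hs, Measure.prod_apply (hadd hs)]
  have hrw : ∀ x : ℝ, (Prod.mk x ⁻¹' ((fun p : ℝ × ℝ => p.1 + p.2) ⁻¹' s))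
      = (fun y => x + y) ⁻¹' s := fun x => rfl
  have hstep : ∀ x : ℝ, gaussianReal 0 v₂ ((fun y => x + y) ⁻¹' s) = gaussianReal x v₂ s := by
    intro x
    rw [← Measure.map_apply (measurable_const_add x) hs, gaussianReal_map_const_add, zero_add]
  simp_rw [hrw, hstep]
  by_cases h₂ : v₂ = 0
  · subst h₂
    simp_rw [gaussianReal_zero_var, Measure.dirac_apply' _ hs]
    rw [lintegral_indicator_one hs, add_zero]
  by_cases h₁ : v₁ = 0
  · subst h₁
    rw [gaussianReal_zero_var, lintegral_dirac, zero_add]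
  exact gauss_conv_lintegral h₁ h₂ hs


lemma sq_toNNReal_eq (c : ℝ) : (⟨c^2, sq_nonneg c⟩ : ℝ≥0) = Real.toNNReal (c^2) := by
  ext
  simp [Real.coe_toNNReal, sq_nonneg c]

lemma pi_gauss_map_lin : ∀ (n : ℕ) (c : Fin n → ℝ),
    (Measure.pi fun _ : Fin n => gaussianReal (0:ℝ) 1).map (fun z : Fin n → ℝ => ∑ i, c i * z i)
      = gaussianReal 0 (∑ i, Real.toNNReal ((c i)^2)) := by
  intro n
  induction n with
  | zero =>
    intro c
    simp only [Finset.univ_eq_empty, Finset.sum_empty]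
    rw [Measure.map_const]
    simp [gaussianReal_zero_var]
  | succ n ih =>
    intro c
    set e := MeasurableEquiv.piFinSuccAbove (fun _ : Fin (n+1) => ℝ) 0 with he
    have hp := measurePreserving_piFinSuccAbove (fun _ : Fin (n+1) => gaussianReal (0:ℝ) 1) 0
    have hpi : (Measure.pi fun _ : Fin (n+1) => gaussianReal (0:ℝ) 1)
        = ((gaussianReal (0:ℝ) 1).prod (Measure.pi fun _ : Fin n => gaussianReal (0:ℝ) 1)).map
            e.symm := by
      rw [← hp.map_eq, MeasurableEquiv.map_symm_map]
    have hsum : Measurable (fun z : Fin (n+1) → ℝ => ∑ i, c i * z i) :=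
      Finset.measurable_sum _ (fun i _ => (measurable_pi_apply i).const_mul _)
    rw [hpi, Measure.map_map hsum e.symm.measurable]
    have hcomp : ((fun z : Fin (n+1) → ℝ => ∑ i, c i * z i) ∘ e.symm)
        = (fun p : ℝ × ℝ => p.1 + p.2)
          ∘ (Prod.map (fun x : ℝ => c 0 * x) (fun w : Fin n → ℝ => ∑ j, c j.succ * w j)) := by
      funext p
      obtain ⟨x, w⟩ := p
      simp only [Function.comp_apply, Prod.map_apply, he,
        MeasurableEquiv.piFinSuccAbove_symm_apply, Fin.insertNthEquiv_apply, Fin.sum_univ_succ,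
        Fin.insertNth_apply_same]
      congr 1
    rw [hcomp, ← Measure.map_map (g := fun p : ℝ × ℝ => p.1 + p.2) (measurable_fst.add measurable_snd)
      ((measurable_const_mul _).prodMap (Finset.measurable_sum _
        (fun i _ => (measurable_pi_apply i).const_mul _)))]
    rw [← Measure.map_prod_map _ _ (measurable_const_mul _)
      (Finset.measurable_sum _ (fun i _ => (measurable_pi_apply i).const_mul _))]
    rw [ih (fun j => c j.succ)]
    have h0 : (gaussianReal (0:ℝ) 1).map (fun x => c 0 * x)
        = gaussianReal 0 (Real.toNNReal ((c 0)^2)) := by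
      rw [show (fun x : ℝ => c 0 * x) = (c 0 * ·) by rfl, gaussianReal_map_const_mul,
        mul_zero, mul_one]
      exact congrArg (gaussianReal 0) (sq_toNNReal_eq (c 0))
    rw [h0, gaussianReal_conv, Fin.sum_univ_succ]


lemma continuous_rr : Continuous rr := by
  unfold rr; fun_prop (disch := intro t; positivity)

lemma continuous_rr' : Continuous rr' := by
  unfold rr'; fun_prop (disch := intro t; positivity)

lemma rr'_odd (t : ℝ) : rr' (-t) = - rr' t := by
  unfold rr'
  have h := Real.exp_ne_zero t
  rw [Real.exp_neg]
  have h2 : (1 + (Real.exp t)⁻¹)^2 = ((1 + Real.exp t)/Real.exp t)^2 := by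
    congr 1; field_simp; ring
  rw [h2]
  field_simp

noncomputable def Hm (v : ℝ≥0) (m : ℝ) : ℝ := ∫ x, rr x ∂(gaussianReal m v)

lemma ennreal_pdf_eq (m : ℝ) (v : ℝ≥0) :
    gaussianPDF m v = fun x => ((Real.toNNReal (gaussianPDFReal m v x)) : ℝ≥0∞) := rfl

lemma integral_gaussianReal_eq {v : ℝ≥0} (hv : v ≠ 0) (m : ℝ) (f : ℝ → ℝ) :
    ∫ x, f x ∂(gaussianReal m v) = ∫ x, f x * gaussianPDFReal m v x := by
  have hmeas : Measurable fun x => Real.toNNReal (gaussianPDFReal m v x) :=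
    measurable_real_toNNReal.comp (measurable_gaussianPDFReal m v)
  rw [gaussianReal_of_var_ne_zero _ hv, ennreal_pdf_eq,
    integral_withDensity_eq_integral_smul hmeas]
  congr 1
  funext x
  rw [NNReal.smul_def, Real.coe_toNNReal _ (gaussianPDFReal_nonneg m v x), smul_eq_mul, mul_comm]

lemma pdf_refl_le {v : ℝ≥0} (hv : v ≠ 0) {m x : ℝ} (hm : 0 ≤ m) (hx : 0 ≤ x) :
    gaussianPDFReal m v (-x) ≤ gaussianPDFReal m v x := by
  unfold gaussianPDFReal
  have hvpos : (0:ℝ) < v := by positivity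
  apply mul_le_mul_of_nonneg_left _ (by positivity)
  apply Real.exp_le_exp.mpr
  rw [div_le_div_iff_of_pos_right (by positivity : (0:ℝ) < 2 * v)]
  nlinarith

lemma D_nonpos {v : ℝ≥0} (hv : v ≠ 0) {m : ℝ} (hm : 0 ≤ m) :
    ∫ x, rr' x ∂(gaussianReal m v) ≤ 0 := by
  rw [integral_gaussianReal_eq hv m rr']
  set f := fun x => rr' x * gaussianPDFReal m v x with hf
  have hfm : AEStronglyMeasurable f volume :=
    (continuous_rr'.measurable.mul (measurable_gaussianPDFReal m v)).aestronglyMeasurable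
  have hbd : ∀ x, ‖f x‖ ≤ gaussianPDFReal m v x := by
    intro x
    rw [hf, Real.norm_eq_abs, abs_mul, abs_of_nonneg (gaussianPDFReal_nonneg m v x)]
    exact mul_le_of_le_one_left (gaussianPDFReal_nonneg m v x) (rr'_abs_le x)
  have hfi : Integrable f := Integrable.mono' (integrable_gaussianPDFReal m v) hfm (ae_of_all _ hbd)
  have hsplit : ∫ x, f x = (∫ x in Ioi 0, f x) + ∫ x in Iic 0, f x := by
    rw [← compl_Ioi, integral_add_compl (measurableSet_Ioi) hfi]
  have hneg : ∫ x in Iic (0:ℝ), f x = ∫ x in Ioi (0:ℝ), f (-x) := by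
    have := integral_comp_neg_Iic (c := (0:ℝ)) (f := fun x => f (-x))
    simp only [neg_neg, neg_zero] at this
    exact this
  rw [hsplit, hneg, ← integral_add hfi.integrableOn]
  swap
  · exact (hfi.comp_neg).integrableOn
  apply setIntegral_nonpos measurableSet_Ioi
  intro x hx
  have hx0 : (0:ℝ) ≤ x := le_of_lt hx
  have : f x + f (-x) = rr' x * (gaussianPDFReal m v x - gaussianPDFReal m v (-x)) := by
    rw [hf]; simp only [rr'_odd]; ring
  rw [this]
  exact mul_nonpos_of_nonpos_of_nonneg (rr'_nonpos hx0)
    (sub_nonneg.mpr (pdf_refl_le hv hm hx0))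

lemma gauss_std_map (m : ℝ) {v : ℝ≥0} (σ : ℝ) (hσ : 0 ≤ σ) (hσv : σ^2 = (v:ℝ)) :
    (gaussianReal 0 1).map (fun u => m + σ * u) = gaussianReal m v := by
  have h1 : (gaussianReal (0:ℝ) 1).map (σ * ·) = gaussianReal 0 v := by
    rw [gaussianReal_map_const_mul, mul_zero, mul_one]
    congr 1
    ext
    simp [hσv]
  have h2 : ((gaussianReal (0:ℝ) 1).map (σ * ·)).map (m + ·) = gaussianReal m v := by
    rw [h1, gaussianReal_map_const_add, zero_add]
  rw [← h2, Measure.map_map (measurable_const_add m) (measurable_const_mul σ)]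
  rfl

lemma integrable_bounded_prob {μ : Measure ℝ} [IsProbabilityMeasure μ] {f : ℝ → ℝ} {C : ℝ}
    (hf : Continuous f) (hC : ∀ x, |f x| ≤ C) : Integrable f μ := by
  apply Integrable.mono' (integrable_const C) hf.aestronglyMeasurable
  exact ae_of_all _ (fun x => (Real.norm_eq_abs (f x)) ▸ hC x)

lemma integral_gauss_comp (m : ℝ) {v : ℝ≥0} (σ : ℝ) (hσ : 0 ≤ σ) (hσv : σ^2 = (v:ℝ))
    (f : ℝ → ℝ) (hf : Continuous f) :
    ∫ x, f x ∂(gaussianReal m v) = ∫ u, f (m + σ * u) ∂(gaussianReal 0 1) := by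
  rw [← gauss_std_map m σ hσ hσv, integral_map (by fun_prop) hf.aestronglyMeasurable]

lemma Hm_hasDerivAt {v : ℝ≥0} (σ : ℝ) (hσ : 0 ≤ σ) (hσv : σ^2 = (v:ℝ)) (m₀ : ℝ) :
    HasDerivAt (Hm v) (∫ x, rr' x ∂(gaussianReal m₀ v)) m₀ := by
  have heq : ∀ m, Hm v m = ∫ u, rr (m + σ * u) ∂(gaussianReal 0 1) := by
    intro m
    exact integral_gauss_comp m σ hσ hσv rr continuous_rr
  have heq' : Hm v = fun m => ∫ u, rr (m + σ * u) ∂(gaussianReal 0 1) := funext heq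
  rw [heq', integral_gauss_comp m₀ σ hσ hσv rr' continuous_rr']
  have key := hasDerivAt_integral_of_dominated_loc_of_deriv_le
    (F := fun m u => rr (m + σ * u)) (F' := fun m u => rr' (m + σ * u))
    (μ := gaussianReal 0 1) (x₀ := m₀) (bound := fun _ => 1) (s := Metric.ball m₀ 1) (Metric.ball_mem_nhds m₀ one_pos)
    ?_ ?_ ?_ ?_ ?_ ?_
  · exact key.2
  · apply Filter.Eventually.of_forall
    intro m
    exact (continuous_rr.comp (by fun_prop)).aestronglyMeasurable
  · exact integrable_bounded_prob (continuous_rr.comp (by fun_prop)) (fun u => rr_abs_le _)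
  · exact (continuous_rr'.comp (by fun_prop)).aestronglyMeasurable
  · apply ae_of_all
    intro u m _
    exact (Real.norm_eq_abs _) ▸ rr'_abs_le _
  · exact integrable_const 1
  · apply ae_of_all
    intro u m _
    have h := (hasDerivAt_rr (m + σ * u)).comp m ((hasDerivAt_id m).add_const (σ * u))
    simpa [Function.comp_def] using h

lemma Hm_anti {v : ℝ≥0} (hv : v ≠ 0) : AntitoneOn (Hm v) (Ici 0) := by
  set σ : ℝ := Real.sqrt v with hσd
  have hσ : 0 ≤ σ := Real.sqrt_nonneg _
  have hσv : σ^2 = (v:ℝ) := Real.sq_sqrt (by positivity)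
  apply antitoneOn_of_deriv_nonpos (convex_Ici 0)
  · exact fun x _ => (Hm_hasDerivAt σ hσ hσv x).continuousAt.continuousWithinAt
  · exact fun x _ => (Hm_hasDerivAt σ hσ hσv x).differentiableAt.differentiableWithinAt
  · intro x hx
    rw [(Hm_hasDerivAt σ hσ hσv x).deriv]
    exact D_nonpos hv (le_of_lt (by simpa using hx))

lemma Hm_even (v : ℝ≥0) (m : ℝ) : Hm v (-m) = Hm v m := by
  have h1 : (gaussianReal m v).map (fun x : ℝ => -x) = gaussianReal (-m) v := by
    have := gaussianReal_map_const_mul (μ := m) (v := v) (-1)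
    rw [show ((-1 : ℝ) * ·) = (fun x : ℝ => -x) by funext x; ring] at this
    rw [this, neg_one_mul]
    congr 1
    ext
    simp
  unfold Hm
  rw [← h1, integral_map (by fun_prop) continuous_rr.aestronglyMeasurable]
  simp_rw [rr_even]


section glue

variable {d : ℕ}

lemma inner_fun_eq (β : EuclideanSpace ℝ (Fin d)) :
    (fun z : EuclideanSpace ℝ (Fin d) => (inner ℝ z β : ℝ)) ∘ WithLp.toLp 2
      = fun z : Fin d → ℝ => ∑ i, β i * z i := by
  funext z
  rw [Function.comp_apply, PiLp.inner_apply]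
  simp [RCLike.inner_apply, mul_comm]

lemma norm_sq_sum (β : EuclideanSpace ℝ (Fin d)) :
    (∑ i, Real.toNNReal ((β i)^2)) = Real.toNNReal (‖β‖^2) := by
  apply NNReal.coe_injective
  rw [NNReal.coe_sum, Real.coe_toNNReal _ (by positivity)]
  rw [show ‖β‖^2 = ∑ i, (β i)^2 by
    rw [EuclideanSpace.norm_eq, Real.sq_sqrt (by positivity)]
    exact Finset.sum_congr rfl (fun i _ => sq_abs _)]
  exact Finset.sum_congr rfl (fun i _ => Real.coe_toNNReal _ (sq_nonneg _))

lemma law_inner (a β : EuclideanSpace ℝ (Fin d)) :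
    (((Measure.pi fun _ : Fin d => gaussianReal 0 1).map (WithLp.toLp 2)).map
        (fun z : EuclideanSpace ℝ (Fin d) => a + z)).map
        (fun z : EuclideanSpace ℝ (Fin d) => (inner ℝ z β : ℝ))
      = gaussianReal (inner ℝ a β : ℝ) (Real.toNNReal (‖β‖^2)) := by
  have hinner : Measurable (fun z : EuclideanSpace ℝ (Fin d) => (inner ℝ z β : ℝ)) := by
    fun_prop
  have hadd : Measurable (fun z : EuclideanSpace ℝ (Fin d) => a + z) :=
    (continuous_const.add continuous_id).measurable
  rw [Measure.map_map hinner hadd]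
  have hcomp : ((fun z : EuclideanSpace ℝ (Fin d) => (inner ℝ z β : ℝ))
        ∘ (fun z : EuclideanSpace ℝ (Fin d) => a + z))
      = (fun s : ℝ => (inner ℝ a β : ℝ) + s)
        ∘ (fun z : EuclideanSpace ℝ (Fin d) => (inner ℝ z β : ℝ)) := by
    funext z
    simp only [Function.comp_apply]
    exact inner_add_left a z β
  rw [hcomp, ← Measure.map_map (measurable_const_add _) hinner,
    Measure.map_map hinner (WithLp.measurable_toLp 2 _), inner_fun_eq,
    pi_gauss_map_lin d (fun i => β i), norm_sq_sum]
  rw [show (fun s : ℝ => (inner ℝ a β : ℝ) + s) = ((inner ℝ a β : ℝ) + ·) by rfl,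
    gaussianReal_map_const_add, zero_add]

end glue

/-- Symmetry and monotonicity of the logistic entropy risk for the two-component
    isotropic Gaussian mixture X = εZ, Z ∼ N(a, I_d), ε Rademacher independent of Z:
    R(β) = R(−β), and on a sphere ‖β‖ = r the risk is decreasing in |β·a|. -/
theorem risk_symmetric_and_decreasing_in_inner
    {d : ℕ} (a : EuclideanSpace ℝ (Fin d))
    {Ω : Type*} [MeasurableSpace Ω] (P : Measure Ω) [IsProbabilityMeasure P]
    (ε : Ω → ℝ) (Z : Ω → EuclideanSpace ℝ (Fin d))
    (hε : Measurable ε) (hZ : Measurable Z)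
    (hindep : IndepFun ε Z P)
    (hεlaw : P.map ε = ((2 : ENNReal)⁻¹) • Measure.dirac (1 : ℝ)
        + ((2 : ENNReal)⁻¹) • Measure.dirac (-1 : ℝ))
    (hZlaw : P.map Z
        = ((Measure.pi fun _ : Fin d => gaussianReal 0 1).map (WithLp.toLp 2)).map
            (fun z : EuclideanSpace ℝ (Fin d) => a + z))
    (ρ : ℝ → ℝ)
    (hρ : ∀ t, ρ t = Real.log (1 + Real.exp t) - t * Real.exp t / (1 + Real.exp t))
    (Risk : EuclideanSpace ℝ (Fin d) → ℝ)
    (hRisk : ∀ β, Risk β = ∫ ω, ρ (inner ℝ (ε ω • Z ω) β : ℝ) ∂P) :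
    (∀ β, Risk β = Risk (-β)) ∧
    (∀ r : ℝ, ∀ β₁ β₂ : EuclideanSpace ℝ (Fin d), ‖β₁‖ = r → ‖β₂‖ = r →
      |(inner ℝ β₁ a : ℝ)| ≤ |(inner ℝ β₂ a : ℝ)| → Risk β₂ ≤ Risk β₁) := by
  have hρrr : ρ = rr := funext hρ
  subst hρrr
  constructor
  · intro β
    rw [hRisk β, hRisk (-β)]
    congr 1
    funext ω
    rw [inner_neg_right, rr_even]
  · intro r β₁ β₂ h1 h2 hle
    by_cases hr : r = 0
    · subst hr
      have e1 : β₁ = 0 := norm_eq_zero.mp h1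
      have e2 : β₂ = 0 := norm_eq_zero.mp h2
      rw [e1, e2]
    have hrpos : 0 < r := lt_of_le_of_ne (h1 ▸ norm_nonneg β₁) (Ne.symm hr)
    set v : ℝ≥0 := Real.toNNReal (r^2) with hvd
    have hv : v ≠ 0 := by
      simp only [hvd, ne_eq, Real.toNNReal_eq_zero, not_le]
      positivity
    have key : ∀ β : EuclideanSpace ℝ (Fin d), ‖β‖ = r → Risk β = Hm v (inner ℝ a β : ℝ) := by
      intro β hβ
      rw [hRisk β]
      -- a.e. ε ω ∈ {-1, 1}
      have hae : ∀ᵐ ω ∂P, ε ω ∈ ({-1, 1} : Set ℝ) := by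
        have hms : MeasurableSet ({-1, 1} : Set ℝ) := by measurability
        have hPS : P (ε ⁻¹' {-1, 1}) = 1 := by
          rw [← Measure.map_apply hε hms, hεlaw]
          simp [Measure.dirac_apply' _ hms]
          rw [← ENNReal.inv_two_add_inv_two]
        have : P ((ε ⁻¹' {-1, 1})ᶜ) = 0 := by
          rw [measure_compl (hε hms) (measure_ne_top _ _), hPS, measure_univ, tsub_self]
        rw [ae_iff]
        convert this using 2
        rfl
      have step1 : ∫ ω, rr (inner ℝ (ε ω • Z ω) β : ℝ) ∂P = ∫ ω, rr (inner ℝ (Z ω) β : ℝ) ∂P := by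
        apply integral_congr_ae
        filter_upwards [hae] with ω hω
        rw [real_inner_smul_left]
        rcases hω with h | h
        · rw [h]
          rw [show (-1 : ℝ) * (inner ℝ (Z ω) β : ℝ) = -(inner ℝ (Z ω) β : ℝ) by ring, rr_even]
        · rw [mem_singleton_iff.mp h, one_mul]
      rw [step1]
      have hinner : Measurable (fun z : EuclideanSpace ℝ (Fin d) => (inner ℝ z β : ℝ)) := by
        fun_prop
      have step2 : ∫ ω, rr (inner ℝ (Z ω) β : ℝ) ∂P
          = ∫ x, rr x ∂(((P.map Z)).map (fun z : EuclideanSpace ℝ (Fin d) => (inner ℝ z β : ℝ))) := by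
        rw [Measure.map_map hinner hZ,
          integral_map (hinner.comp hZ).aemeasurable continuous_rr.aestronglyMeasurable]
        rfl
      rw [step2, hZlaw, law_inner a β, hβ, ← hvd]
      rfl
    rw [key β₁ h1, key β₂ h2]
    have hswap : ∀ β : EuclideanSpace ℝ (Fin d), (inner ℝ a β : ℝ) = (inner ℝ β a : ℝ) :=
      fun β => real_inner_comm β a
    have habs : ∀ m : ℝ, Hm v m = Hm v |m| := by
      intro m
      rcases abs_cases m with ⟨h, _⟩ | ⟨h, _⟩
      · rw [h]
      · rw [h, Hm_even]
    rw [habs, habs (inner ℝ a β₁ : ℝ), hswap, hswap]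
    exact Hm_anti hv (mem_Ici.mpr (abs_nonneg _)) (mem_Ici.mpr (abs_nonneg _)) hle
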